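/- For every y ≥ 1, one has ϑ₂''(y) < 2 π² e^{−πy/4}/16 + 2 · (1 + 0.00008) · 81 π² e^{−9πy/4}/16, where ϑ₂'' denotes the second derivative of ϑ₂. -/

import Mathlib

open Real Set Filter

set_option maxHeartbeats 1000000

/-- The Jacobi theta function ϑ₂, defined for real `y` by
`ϑ₂(y) = ∑_{n ∈ ℤ} e^{−π y (n + 1/2)²}`. -/
noncomputable def theta2 (y : ℝ) : ℝ :=
  ∑' n : ℤ, Real.exp (-Real.pi * y * ((n : ℝ) + 1/2) ^ 2)

/-- The coefficient `π (n + 1/2)²`. -/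
noncomputable def thc (n : ℤ) : ℝ := Real.pi * ((n : ℝ) + 1/2) ^ 2

lemma thc_pos (n : ℤ) : 0 < thc n := by
  apply mul_pos Real.pi_pos
  have h2 : (2 * n + 1 : ℤ) ≠ 0 := by omega
  have h3 : ((2 * n + 1 : ℤ) : ℝ) ≠ 0 := Int.cast_ne_zero.mpr h2
  have h : ((n : ℝ) + 1/2) ≠ 0 := by
    intro h
    apply h3
    push_cast
    linarith
  positivity

lemma thc_symm (n : ℕ) : thc (-(n + 1)) = thc n := by
  unfold thc
  push_cast
  ring

lemma thc_nat_lb (n : ℕ) : Real.pi * n ≤ thc n := by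
  unfold thc
  have h : (n : ℝ) ≤ (((n:ℤ):ℝ) + 1/2) ^ 2 := by
    push_cast
    nlinarith [sq_nonneg ((n:ℝ) - 1/2)]
  exact mul_le_mul_of_nonneg_left h Real.pi_pos.le

lemma thc_nat_ub (n : ℕ) : thc n ≤ Real.pi * ((n : ℝ) + 1) ^ 2 := by
  unfold thc
  have h : (((n : ℤ) : ℝ) + 1/2)^2 ≤ ((n : ℝ) + 1)^2 := by
    push_cast
    nlinarith [Nat.cast_nonneg (α := ℝ) n]
  exact mul_le_mul_of_nonneg_left h Real.pi_pos.le

/-- Summability over ℕ of `thc n ^ k * exp (-thc n * a)` for `a > 0`. -/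
lemma summable_thc_nat (k : ℕ) (a : ℝ) (ha : 0 < a) :
    Summable (fun n : ℕ => thc n ^ k * Real.exp (-thc n * a)) := by
  have hr0 : 0 < Real.exp (-Real.pi * a) := Real.exp_pos _
  have hr1 : Real.exp (-Real.pi * a) < 1 := by
    rw [Real.exp_lt_one_iff]
    have := Real.pi_pos
    nlinarith
  have hbound : ∀ n : ℕ, thc n ^ k * Real.exp (-thc n * a)
      ≤ Real.pi ^ k * ((n : ℝ) + 1) ^ (2 * k) * Real.exp (-Real.pi * a) ^ n := by
    intro n
    have h1 : thc n ^ k ≤ Real.pi ^ k * ((n : ℝ) + 1) ^ (2 * k) := by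
      have := thc_nat_ub n
      calc thc n ^ k ≤ (Real.pi * ((n : ℝ) + 1) ^ 2) ^ k :=
            pow_le_pow_left₀ (thc_pos _).le this k
        _ = Real.pi ^ k * ((n : ℝ) + 1) ^ (2 * k) := by
            rw [mul_pow, ← pow_mul]
    have h2 : Real.exp (-thc n * a) ≤ Real.exp (-Real.pi * a) ^ n := by
      rw [← Real.exp_nat_mul, Real.exp_le_exp]
      have := thc_nat_lb n
      nlinarith
    have h3 : 0 ≤ thc n ^ k := pow_nonneg (thc_pos _).le k
    have h4 : 0 ≤ Real.pi ^ k * ((n : ℝ) + 1) ^ (2 * k) := by positivity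
    calc thc n ^ k * Real.exp (-thc n * a) ≤ thc n ^ k * Real.exp (-Real.pi * a) ^ n :=
          mul_le_mul_of_nonneg_left h2 h3
      _ ≤ Real.pi ^ k * ((n : ℝ) + 1) ^ (2 * k) * Real.exp (-Real.pi * a) ^ n :=
          mul_le_mul_of_nonneg_right h1 (pow_nonneg hr0.le n)
  have hbound2 : ∀ n : ℕ, Real.pi ^ k * ((n : ℝ) + 1) ^ (2 * k) * Real.exp (-Real.pi * a) ^ n
      ≤ (Real.pi ^ k * 2 ^ (2 * k)) *
        ((n : ℝ) ^ (2 * k) * Real.exp (-Real.pi * a) ^ n + Real.exp (-Real.pi * a) ^ n) := by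
    intro n
    have key : ((n : ℝ) + 1) ^ (2 * k) ≤ 2 ^ (2 * k) * ((n : ℝ) ^ (2 * k) + 1) := by
      rcases Nat.eq_zero_or_pos n with h | h
      · subst h
        have h1 : (1:ℝ) ≤ 2 ^ (2 * k) := one_le_pow₀ (by norm_num)
        have h2 : (0:ℝ) ≤ (0:ℝ) ^ (2 * k) := by positivity
        simp only [Nat.cast_zero, zero_add, one_pow]
        nlinarith
      · have hn1 : (1:ℝ) ≤ (n : ℝ) := by exact_mod_cast h
        have : ((n : ℝ) + 1) ^ (2 * k) ≤ (2 * (n : ℝ)) ^ (2 * k) := by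
          apply pow_le_pow_left₀ (by linarith) (by linarith)
        calc ((n : ℝ) + 1) ^ (2 * k) ≤ (2 * (n : ℝ)) ^ (2 * k) := this
          _ = 2 ^ (2 * k) * (n : ℝ) ^ (2 * k) := mul_pow 2 _ _
          _ ≤ 2 ^ (2 * k) * ((n : ℝ) ^ (2 * k) + 1) := by
              have : (0:ℝ) ≤ 2 ^ (2 * k) := by positivity
              nlinarith
    have hrn : (0:ℝ) ≤ Real.exp (-Real.pi * a) ^ n := pow_nonneg hr0.le n
    have hpk : (0:ℝ) ≤ Real.pi ^ k := pow_nonneg Real.pi_pos.le k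
    calc Real.pi ^ k * ((n : ℝ) + 1) ^ (2 * k) * Real.exp (-Real.pi * a) ^ n
        = Real.pi ^ k * (((n : ℝ) + 1) ^ (2 * k) * Real.exp (-Real.pi * a) ^ n) := by ring
      _ ≤ Real.pi ^ k * ((2 ^ (2 * k) * ((n : ℝ) ^ (2 * k) + 1)) * Real.exp (-Real.pi * a) ^ n) :=
          mul_le_mul_of_nonneg_left (mul_le_mul_of_nonneg_right key hrn) hpk
      _ = (Real.pi ^ k * 2 ^ (2 * k)) *
          ((n : ℝ) ^ (2 * k) * Real.exp (-Real.pi * a) ^ n + Real.exp (-Real.pi * a) ^ n) := by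
          ring
  have hs : Summable (fun n : ℕ => (Real.pi ^ k * 2 ^ (2 * k)) *
      ((n : ℝ) ^ (2 * k) * Real.exp (-Real.pi * a) ^ n + Real.exp (-Real.pi * a) ^ n)) := by
    have h0 : Summable (fun n : ℕ => (n : ℝ) ^ (2 * k) * Real.exp (-Real.pi * a) ^ n) := by
      have : ‖Real.exp (-Real.pi * a)‖ < 1 := by
        rwa [Real.norm_eq_abs, abs_of_pos hr0]
      exact summable_pow_mul_geometric_of_norm_lt_one (2 * k) this
    exact ((h0.add (summable_geometric_of_lt_one hr0.le hr1)).mul_left _)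
  exact Summable.of_nonneg_of_le
    (fun n => mul_nonneg (pow_nonneg (thc_pos _).le k) (Real.exp_pos _).le)
    (fun n => le_trans (hbound n) (hbound2 n)) hs

lemma summable_thc_int (k : ℕ) (a : ℝ) (ha : 0 < a) :
    Summable (fun n : ℤ => thc n ^ k * Real.exp (-thc n * a)) := by
  apply Summable.of_nat_of_neg_add_one (summable_thc_nat k a ha)
  apply (summable_thc_nat k a ha).congr
  intro n
  rw [show (-((n : ℤ) + 1)) = -((n : ℕ) + 1 : ℤ) by push_cast; ring, thc_symm]

lemma hasDerivAt_exp_thc (n : ℤ) (z : ℝ) :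
    HasDerivAt (fun y : ℝ => Real.exp (-thc n * y)) (-thc n * Real.exp (-thc n * z)) z := by
  have h : HasDerivAt (fun y : ℝ => -thc n * y) (-thc n) z := by
    simpa using (hasDerivAt_id z).const_mul (-thc n)
  have h2 := h.exp
  simpa [mul_comm] using h2

lemma theta2_eq : theta2 = fun y : ℝ => ∑' n : ℤ, Real.exp (-thc n * y) := by
  funext y
  unfold theta2 thc
  apply tsum_congr
  intro n
  ring_nf

/-- First derivative of theta2 on (1/2, ∞). -/
lemma theta2_hasDerivAt {y : ℝ} (hy : y ∈ Ioi (1/2 : ℝ)) :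
    HasDerivAt theta2 (∑' n : ℤ, -thc n * Real.exp (-thc n * y)) y := by
  rw [theta2_eq]
  apply hasDerivAt_tsum_of_isPreconnected
    (u := fun n : ℤ => thc n * Real.exp (-thc n * (1/2)))
    ((summable_thc_int 1 (1/2) (by norm_num)).congr (fun n => by rw [pow_one]))
    isOpen_Ioi isPreconnected_Ioi
    (fun n z _ => hasDerivAt_exp_thc n z)
    ?_ (show (1:ℝ) ∈ Ioi (1/2:ℝ) by norm_num)
    ((summable_thc_int 0 1 one_pos).congr (fun n => by rw [pow_zero, one_mul])) hy
  intro n z hz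
  rw [Real.norm_eq_abs, abs_mul, abs_neg, abs_of_pos (thc_pos n), abs_of_pos (Real.exp_pos _)]
  apply mul_le_mul_of_nonneg_left _ (thc_pos n).le
  rw [Real.exp_le_exp]
  have := (thc_pos n).le
  have hz' : (1/2:ℝ) < z := hz
  nlinarith

/-- Second derivative of theta2 on (1/2, ∞). -/
lemma theta2_deriv_hasDerivAt {y : ℝ} (hy : y ∈ Ioi (1/2 : ℝ)) :
    HasDerivAt (fun z => ∑' n : ℤ, -thc n * Real.exp (-thc n * z))
      (∑' n : ℤ, thc n ^ 2 * Real.exp (-thc n * y)) y := by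
  apply hasDerivAt_tsum_of_isPreconnected
    (u := fun n : ℤ => thc n ^ 2 * Real.exp (-thc n * (1/2)))
    (summable_thc_int 2 (1/2) (by norm_num))
    isOpen_Ioi isPreconnected_Ioi
    (fun n z _ => by
      have h := (hasDerivAt_exp_thc n z).const_mul (-thc n)
      convert h using 1
      all_goals first | rfl | ring)
    ?_ (show (1:ℝ) ∈ Ioi (1/2:ℝ) by norm_num)
    ?_ hy
  · intro n z hz
    rw [Real.norm_eq_abs, abs_mul, abs_of_nonneg (pow_nonneg (thc_pos n).le 2),
      abs_of_pos (Real.exp_pos _)]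
    have hz' : (1/2:ℝ) < z := hz
    have h1 : Real.exp (-thc n * z) ≤ Real.exp (-thc n * (1/2)) := by
      rw [Real.exp_le_exp]
      nlinarith [(thc_pos n).le]
    exact mul_le_mul_of_nonneg_left h1 (pow_nonneg (thc_pos n).le 2)
  · apply ((summable_thc_int 1 1 one_pos).neg).congr
    intro n
    rw [pow_one]
    ring

lemma iteratedDeriv_two_theta2 {y : ℝ} (hy : 1 ≤ y) :
    iteratedDeriv 2 theta2 y = ∑' n : ℤ, thc n ^ 2 * Real.exp (-thc n * y) := by
  have hy' : y ∈ Ioi (1/2 : ℝ) := by simp; linarith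
  rw [show (2:ℕ) = 1 + 1 from rfl, iteratedDeriv_succ, iteratedDeriv_one]
  have hmem : Ioi (1/2 : ℝ) ∈ nhds y := Ioi_mem_nhds (by linarith)
  have heq : deriv theta2 =ᶠ[nhds y] fun z => ∑' n : ℤ, -thc n * Real.exp (-thc n * z) := by
    filter_upwards [hmem] with z hz
    exact (theta2_hasDerivAt hz).deriv
  rw [heq.deriv_eq]
  exact (theta2_deriv_hasDerivAt hy').deriv

/-- Numeric fact: `e^{4π} > 280000`. -/
lemma exp_four_pi_large : (280000 : ℝ) < Real.exp (4 * Real.pi) := by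
  have hpi : (3.141592 : ℝ) < Real.pi := Real.pi_gt_d6
  have he := Real.exp_one_gt_d9
  have h1 : (1.070796 : ℝ) ≤ Real.exp (0.070796 : ℝ) := by
    have := Real.add_one_le_exp (0.070796 : ℝ)
    linarith
  have h2 : Real.exp (0.566368 : ℝ) = Real.exp (0.070796 : ℝ) ^ (8:ℕ) := by
    rw [← Real.exp_nat_mul]; norm_num
  have h3 : Real.exp (12 : ℝ) = Real.exp 1 ^ (12:ℕ) := by
    rw [← Real.exp_nat_mul]; norm_num
  have h4 : Real.exp (4 * Real.pi) =
      Real.exp 12 * Real.exp (0.566368 : ℝ) * Real.exp (4 * Real.pi - 12.566368) := by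
    rw [← Real.exp_add, ← Real.exp_add]; norm_num
  have h5 : (1:ℝ) ≤ Real.exp (4 * Real.pi - 12.566368) :=
    Real.one_le_exp (by nlinarith)
  calc (280000 : ℝ) < (2.7182818283 : ℝ) ^ (12:ℕ) * (1.070796 : ℝ) ^ (8:ℕ) * 1 := by norm_num
    _ ≤ Real.exp 12 * Real.exp (0.566368 : ℝ) * Real.exp (4 * Real.pi - 12.566368) := by
        rw [h2, h3]
        gcongr <;> first | exact he.le | exact h1 | exact h5 | positivity | norm_num
    _ = Real.exp (4 * Real.pi) := h4.symm

theorem theta2_second_deriv_upper_bound (y : ℝ) (hy : 1 ≤ y) :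
    iteratedDeriv 2 theta2 y < 2 * Real.pi ^ 2 * Real.exp (-Real.pi * y / 4) / 16 +
      2 * (1 + 0.00008) * 81 * Real.pi ^ 2 * Real.exp (-9 * Real.pi * y / 4) / 16 := by
  have hy0 : (0:ℝ) < y := by linarith
  rw [iteratedDeriv_two_theta2 hy]
  set g : ℕ → ℝ := fun n => thc n ^ 2 * Real.exp (-thc n * y) with hg
  have hgsum : Summable g := summable_thc_nat 2 y hy0
  have hneg : Summable (fun n : ℕ => thc (-((n:ℤ) + 1)) ^ 2 * Real.exp (-thc (-((n:ℤ)+1)) * y)) := by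
    apply hgsum.congr
    intro n
    rw [show (-((n : ℤ) + 1)) = -((n : ℕ) + 1 : ℤ) by push_cast; ring, thc_symm]
  have hsplit : (∑' n : ℤ, thc n ^ 2 * Real.exp (-thc n * y))
      = (∑' n : ℕ, g n) + ∑' n : ℕ, g n := by
    rw [tsum_of_nat_of_neg_add_one hgsum hneg]
    congr 1
    apply tsum_congr
    intro n
    rw [show (-((n : ℤ) + 1)) = -((n : ℕ) + 1 : ℤ) by push_cast; ring, thc_symm]
  rw [hsplit]
  have hsplit2 : (∑' n : ℕ, g n) = g 0 + g 1 + ∑' n : ℕ, g (n + 2) := by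
    rw [← Summable.sum_add_tsum_nat_add 2 hgsum]
    simp [Finset.sum_range_succ]
  have hg0 : g 0 = Real.pi ^ 2 * Real.exp (-Real.pi * y / 4) / 16 := by
    simp only [hg]
    unfold thc
    norm_num
    ring_nf
  have hg1 : g 1 = 81 * Real.pi ^ 2 * Real.exp (-9 * Real.pi * y / 4) / 16 := by
    simp only [hg]
    unfold thc
    norm_num
    ring_nf
  have htail : (∑' n : ℕ, g (n + 2)) <
      0.00008 * 81 * Real.pi ^ 2 * Real.exp (-9 * Real.pi * y / 4) / 16 := by
    set C : ℝ := Real.pi ^ 2 * (625/16) * Real.exp (-4 * Real.pi) *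
        Real.exp (-9 * Real.pi * y / 4) with hC
    have hK : ∀ n : ℕ, g (n + 2) ≤ C * Real.exp (-1 : ℝ) ^ n := by
      intro n
      have hx : (0:ℝ) ≤ (n:ℝ) := Nat.cast_nonneg n
      have hpi : (3.141592 : ℝ) < Real.pi := Real.pi_gt_d6
      set T : ℝ := Real.pi * ((n:ℝ) + 5/2) ^ 2 with hT
      have hthc : thc ((n + 2 : ℕ) : ℤ) = T := by
        unfold thc; rw [hT]; push_cast; ring
      have hgval : g (n + 2) = T ^ 2 * Real.exp (-T * y) := by
        simp only [hg]; rw [hthc]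
      have hT925 : 25 * Real.pi / 4 ≤ T := by
        rw [hT]
        nlinarith [Real.pi_pos, hx, mul_nonneg Real.pi_pos.le hx,
          mul_nonneg Real.pi_pos.le (mul_nonneg hx hx)]
      have e1 : Real.exp (-T * y) ≤
          Real.exp (-9 * Real.pi * y / 4) * Real.exp (9 * Real.pi / 4 - T) := by
        rw [← Real.exp_add, Real.exp_le_exp]
        nlinarith
      have hb : (n:ℝ) + 5/2 ≤ 5/2 * Real.exp (2/5 * (n:ℝ)) := by
        have h := Real.add_one_le_exp (2/5 * (n:ℝ))
        nlinarith
      have e2 : T ^ 2 ≤ Real.pi ^ 2 * (625/16) * Real.exp (2/5 * (n:ℝ)) ^ (4:ℕ) := by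
        have h4 : ((n:ℝ) + 5/2) ^ (4:ℕ) ≤ (5/2 * Real.exp (2/5 * (n:ℝ))) ^ (4:ℕ) :=
          pow_le_pow_left₀ (by positivity) hb 4
        calc T ^ 2 = Real.pi ^ 2 * ((n:ℝ) + 5/2) ^ (4:ℕ) := by rw [hT]; ring
          _ ≤ Real.pi ^ 2 * (5/2 * Real.exp (2/5 * (n:ℝ))) ^ (4:ℕ) :=
              mul_le_mul_of_nonneg_left h4 (by positivity)
          _ = Real.pi ^ 2 * (625/16) * Real.exp (2/5 * (n:ℝ)) ^ (4:ℕ) := by ring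
      have e2' : Real.exp (2/5 * (n:ℝ)) ^ (4:ℕ) = Real.exp (8/5 * (n:ℝ)) := by
        rw [← Real.exp_nat_mul]; congr 1; push_cast; ring
      have hxn : Real.exp (-1 : ℝ) ^ n = Real.exp (-(n:ℝ)) := by
        rw [← Real.exp_nat_mul]; congr 1; push_cast; ring
      have e3 : Real.exp (9 * Real.pi / 4 - T) * Real.exp (8/5 * (n:ℝ)) ≤
          Real.exp (-4 * Real.pi) * Real.exp (-1 : ℝ) ^ n := by
        rw [hxn, ← Real.exp_add, ← Real.exp_add, Real.exp_le_exp, hT]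
        nlinarith [sq_nonneg ((n:ℝ))]
      calc g (n + 2) = T ^ 2 * Real.exp (-T * y) := hgval
        _ ≤ (Real.pi ^ 2 * (625/16) * Real.exp (2/5 * (n:ℝ)) ^ (4:ℕ)) *
            (Real.exp (-9 * Real.pi * y / 4) * Real.exp (9 * Real.pi / 4 - T)) :=
            mul_le_mul e2 e1 (Real.exp_pos _).le (by positivity)
        _ = (Real.pi ^ 2 * (625/16) * Real.exp (-9 * Real.pi * y / 4)) *
            (Real.exp (9 * Real.pi / 4 - T) * Real.exp (8/5 * (n:ℝ))) := by
            rw [e2']; ring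
        _ ≤ (Real.pi ^ 2 * (625/16) * Real.exp (-9 * Real.pi * y / 4)) *
            (Real.exp (-4 * Real.pi) * Real.exp (-1 : ℝ) ^ n) :=
            mul_le_mul_of_nonneg_left e3 (by positivity)
        _ = C * Real.exp (-1 : ℝ) ^ n := by rw [hC]; ring
    have hlt1 : Real.exp (-1 : ℝ) < 1 := by
      rw [Real.exp_lt_one_iff]; norm_num
    have hts : Summable (fun n : ℕ => g (n + 2)) := (summable_nat_add_iff 2).mpr hgsum
    have hgeo : Summable (fun n : ℕ => C * Real.exp (-1 : ℝ) ^ n) :=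
      (summable_geometric_of_lt_one (Real.exp_pos _).le hlt1).mul_left C
    have hle : (∑' n : ℕ, g (n + 2)) ≤ C * (1 - Real.exp (-1 : ℝ))⁻¹ := by
      calc (∑' n : ℕ, g (n + 2)) ≤ ∑' n : ℕ, C * Real.exp (-1 : ℝ) ^ n :=
            Summable.tsum_le_tsum hK hts hgeo
        _ = C * (1 - Real.exp (-1 : ℝ))⁻¹ := by
            rw [tsum_mul_left, tsum_geometric_of_lt_one (Real.exp_pos _).le hlt1]
    -- numerics
    have hprod : Real.exp (-4 * Real.pi) * Real.exp (4 * Real.pi) = 1 := by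
      rw [← Real.exp_add, show -4 * Real.pi + 4 * Real.pi = 0 by ring, Real.exp_zero]
    have h6 : Real.exp (-4 * Real.pi) < 1 / 280000 := by
      nlinarith [exp_four_pi_large, Real.exp_pos (-4 * Real.pi)]
    have hprod1 : Real.exp (-1 : ℝ) * Real.exp (1 : ℝ) = 1 := by
      rw [← Real.exp_add, show (-1 : ℝ) + 1 = 0 by ring, Real.exp_zero]
    have hIe : Real.exp (-1 : ℝ) < 0.368 := by
      nlinarith [Real.exp_one_gt_d9, Real.exp_pos (-1 : ℝ)]
    have hIpos : (0:ℝ) < 1 - Real.exp (-1 : ℝ) := by linarith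
    have hP : (0:ℝ) < Real.pi ^ 2 * Real.exp (-9 * Real.pi * y / 4) := by positivity
    have hsmall : (625/16 : ℝ) * Real.exp (-4 * Real.pi) <
        0.00008 * 81 / 16 * (1 - Real.exp (-1 : ℝ)) := by nlinarith
    have hCD : C < (0.00008 * 81 * Real.pi ^ 2 * Real.exp (-9 * Real.pi * y / 4) / 16) *
        (1 - Real.exp (-1 : ℝ)) := by
      rw [hC]
      nlinarith [mul_lt_mul_of_pos_left hsmall hP]
    calc (∑' n : ℕ, g (n + 2)) ≤ C * (1 - Real.exp (-1 : ℝ))⁻¹ := hle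
      _ < ((0.00008 * 81 * Real.pi ^ 2 * Real.exp (-9 * Real.pi * y / 4) / 16) *
          (1 - Real.exp (-1 : ℝ))) * (1 - Real.exp (-1 : ℝ))⁻¹ :=
          mul_lt_mul_of_pos_right hCD (inv_pos.mpr hIpos)
      _ = 0.00008 * 81 * Real.pi ^ 2 * Real.exp (-9 * Real.pi * y / 4) / 16 := by
          field_simp
  rw [hsplit2, hg0, hg1]
  nlinarith [htail]
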